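/- Let a, b, c be positive integers with a = c and b ≠ c. Then: (1) for every finite colouring of the positive integers and every N ∈ ℕ there exist a colour class containing positive integers x, y, z with x > N·y and a·x + b·y = c·z; (2) there exist a finite colouring of the positive integers and N ∈ ℕ such that no colour class contains positive integers x, y, z with y > N·x and a·x + b·y = c·z. -/

import Mathlib

open Filter

lemma vdw_fin (r K : ℕ) (hK : 0 < K) : ∃ W : ℕ, ∀ col : ℕ → Fin r,
    ∃ k m : ℕ, 0 < k ∧ k * K + m ≤ W ∧
      ∀ s, 0 < s → s ≤ K → col (k * s + m) = col (k + m) := by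
  rcases Nat.eq_zero_or_pos r with hr | hr
  · subst hr; exact ⟨0, fun col => (col 0).elim0⟩
  by_contra h
  simp only [not_exists, not_forall] at h
  choose colW hW using h
  set U : Ultrafilter ℕ := Filter.hyperfilter ℕ with hU
  have hex : ∀ n : ℕ, ∃ i : Fin r, {W | colW W n = i} ∈ U := by
    intro n
    by_contra hno
    push_neg at hno
    have hco : ∀ i : Fin r, {W | colW W n = i}ᶜ ∈ (U : Filter ℕ) := fun i =>
      Ultrafilter.compl_mem_iff_notMem.mpr (hno i)
    have : (⋂ i : Fin r, {W | colW W n = i}ᶜ) ∈ (U : Filter ℕ) :=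
      Filter.iInter_mem.mpr hco
    obtain ⟨W, hWmem⟩ := Filter.nonempty_of_mem this
    simp only [Set.mem_iInter, Set.mem_compl_iff, Set.mem_setOf_eq] at hWmem
    exact hWmem (colW W n) rfl
  choose col hcol using hex
  obtain ⟨k, hk, m, i, hmono⟩ :=
    Combinatorics.exists_mono_homothetic_copy (Finset.Icc 1 K) col
  have hmono' : ∀ s, 0 < s → s ≤ K → col (k * s + m) = i := by
    intro s hs1 hs2
    have := hmono s (Finset.mem_Icc.mpr ⟨hs1, hs2⟩)
    rwa [nsmul_eq_mul] at this
  set B := k * K + m with hB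
  have hfin : ({W : ℕ | B ≤ W}ᶜ).Finite := by
    apply (Set.finite_Iio B).subset
    intro x hx
    simp only [Set.mem_compl_iff, Set.mem_setOf_eq, not_le] at hx
    exact hx
  have hT : ({W | B ≤ W} ∩ ⋂ s ∈ Finset.Icc 1 K,
      {W | colW W (k * s + m) = col (k * s + m)}) ∈ (U : Filter ℕ) := by
    apply Filter.inter_mem
    · exact Filter.mem_hyperfilter_of_finite_compl hfin
    · exact (Filter.biInter_finset_mem _).mpr (fun s _ => hcol (k * s + m))
  obtain ⟨W, hW1, hW2⟩ := Filter.nonempty_of_mem hT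
  refine hW W k m ⟨hk, hW1, ?_⟩
  intro s hs1 hs2
  simp only [Set.mem_iInter, Set.mem_setOf_eq] at hW2
  have h1 : colW W (k * s + m) = col (k * s + m) :=
    hW2 s (Finset.mem_Icc.mpr ⟨hs1, hs2⟩)
  have h2 : colW W (k * 1 + m) = col (k * 1 + m) :=
    hW2 1 (Finset.mem_Icc.mpr ⟨le_rfl, hK⟩)
  rw [h1, hmono' s hs1 hs2, ← mul_one k, h2, hmono' 1 one_pos hK]

lemma rado_key(r p q N : ℕ) (hp : 0 < p) (hq : 0 < q) :
    ∀ (n : ℕ) (I : Finset (Fin r)), I.card ≤ n → ∃ M : ℕ, ∀ col : ℕ → Fin r,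
      (∀ u, 0 < u → u ≤ M → col u ∈ I) →
      ∃ t x, 0 < t ∧ 0 < x ∧ q * t ≤ M ∧ x + p * t ≤ M ∧
        col (q * t) = col x ∧ col x = col (x + p * t) ∧ N * (q * t) < x := by
  intro n
  induction n with
  | zero =>
    intro I hI
    have hIe : I = ∅ := Finset.card_eq_zero.mp (Nat.le_antisymm hI (Nat.zero_le _))
    exact ⟨1, fun col hcol => absurd (hcol 1 one_pos le_rfl) (by simp [hIe])⟩
  | succ n ih =>
    intro I hI
    have H : ∀ i : Fin r, ∃ M : ℕ, i ∈ I → ∀ col : ℕ → Fin r,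
        (∀ u, 0 < u → u ≤ M → col u ∈ I.erase i) →
        ∃ t x, 0 < t ∧ 0 < x ∧ q * t ≤ M ∧ x + p * t ≤ M ∧
          col (q * t) = col x ∧ col x = col (x + p * t) ∧ N * (q * t) < x := by
      intro i
      by_cases hi : i ∈ I
      · have hcard : (I.erase i).card ≤ n := by
          have := Finset.card_erase_of_mem hi
          omega
        obtain ⟨M, hM⟩ := ih (I.erase i) hcard
        exact ⟨M, fun _ => hM⟩
      · exact ⟨0, fun h => absurd h hi⟩
    choose F hF using H
    set J := Finset.univ.sup F + 1 with hJ
    have hJ1 : 0 < J := Nat.succ_pos _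
    have hFJ : ∀ i : Fin r, F i ≤ J := fun i =>
      le_trans (Finset.le_sup (Finset.mem_univ i)) (Nat.le_succ _)
    set K := (N * q + p) * J + 1 with hK
    have hK1 : 0 < K := Nat.succ_pos _
    obtain ⟨W, hW⟩ := vdw_fin r K hK1
    refine ⟨q * J * W, fun col hcol => ?_⟩
    obtain ⟨k, m, hk, hkKm, hmono⟩ := hW col
    have hkW : k ≤ W := by
      calc k ≤ k * K := Nat.le_mul_of_pos_right k hK1
        _ ≤ k * K + m := Nat.le_add_right _ _
        _ ≤ W := hkKm
    have hWpos : 0 < W := lt_of_lt_of_le hk hkW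
    have hWM : W ≤ q * J * W := Nat.le_mul_of_pos_left W (by positivity)
    have hap : ∀ s, 0 < s → s ≤ K → (0 < k * s + m ∧ k * s + m ≤ q * J * W) := by
      intro s hs1 hs2
      constructor
      · positivity
      · calc k * s + m ≤ k * K + m := by nlinarith
          _ ≤ W := hkKm
          _ ≤ q * J * W := hWM
    set i₀ := col (k + m) with hi0
    have hi₀I : i₀ ∈ I := by
      have h1 := hap 1 one_pos hK1
      rw [mul_one] at h1
      exact hcol (k + m) h1.1 h1.2
    by_cases hA : ∃ j, 0 < j ∧ j ≤ J ∧ col (q * (j * k)) = i₀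
    · obtain ⟨j, hj1, hjJ, hji⟩ := hA
      have hpj : p * j ≤ p * J := Nat.mul_le_mul_left p hjJ
      have hpjK : p * j + (N * q * J + 1) ≤ K := by
        calc p * j + (N * q * J + 1) ≤ p * J + (N * q * J + 1) := by omega
          _ = (N * q + p) * J + 1 := by ring
          _ = K := rfl
      have hKpj : 0 < K - p * j := by omega
      refine ⟨j * k, k * (K - p * j) + m, by positivity,
        Nat.lt_of_lt_of_le (Nat.mul_pos hk hKpj) (Nat.le_add_right _ _), ?_, ?_, ?_, ?_, ?_⟩
      · -- q * (j * k) ≤ q * J * W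
        calc q * (j * k) ≤ q * (J * W) := by
              apply Nat.mul_le_mul_left
              exact Nat.mul_le_mul hjJ hkW
          _ = q * J * W := (mul_assoc q J W).symm
      · -- x + p * t ≤ M
        have : k * (K - p * j) + m + p * (j * k) = k * K + m := by
          have h1 : p * j ≤ K := by omega
          have : k * (K - p * j) + k * (p * j) = k * K := by
            rw [← Nat.mul_add, Nat.sub_add_cancel h1]
          calc k * (K - p * j) + m + p * (j * k)
              = k * (K - p * j) + k * (p * j) + m := by ring
            _ = k * K + m := by rw [this]
        rw [this]
        exact le_trans hkKm hWM
      · -- col (q * (j*k)) = col x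
        have hs : 0 < K - p * j ∧ K - p * j ≤ K := by omega
        rw [hji, hi0]
        exact (hmono (K - p * j) hs.1 hs.2).symm
      · -- col x = col (x + p * t)
        have hs : 0 < K - p * j ∧ K - p * j ≤ K := by omega
        have hx := hmono (K - p * j) hs.1 hs.2
        have hz : k * (K - p * j) + m + p * (j * k) = k * K + m := by
          have h1 : p * j ≤ K := by omega
          have h2 : k * (K - p * j) + k * (p * j) = k * K := by
            rw [← Nat.mul_add, Nat.sub_add_cancel h1]
          calc k * (K - p * j) + m + p * (j * k)
              = k * (K - p * j) + k * (p * j) + m := by ring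
            _ = k * K + m := by rw [h2]
        rw [hz, hx]
        exact (hmono K hK1 le_rfl).symm
      · -- ratio
        have h1 : N * (q * (j * k)) ≤ N * q * J * k := by
          calc N * (q * (j * k)) = N * q * j * k := by ring
            _ ≤ N * q * J * k := by
              apply Nat.mul_le_mul_right
              exact Nat.mul_le_mul_left _ hjJ
        calc N * (q * (j * k)) ≤ N * q * J * k := h1
          _ < (N * q * J + 1) * k := (Nat.mul_lt_mul_right hk).mpr (by omega)
          _ ≤ (K - p * j) * k := by
            apply Nat.mul_le_mul_right
            omega
          _ = k * (K - p * j) := mul_comm _ _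
          _ ≤ k * (K - p * j) + m := Nat.le_add_right _ _
    · -- case B
      push_neg at hA
      have hB : ∀ u, 0 < u → u ≤ F i₀ → col (q * (u * k)) ∈ I.erase i₀ := by
        intro u hu1 hu2
        have huJ : u ≤ J := le_trans hu2 (hFJ i₀)
        have hb1 : 0 < q * (u * k) := by positivity
        have hb2 : q * (u * k) ≤ q * J * W := by
          calc q * (u * k) ≤ q * (J * W) := by
                apply Nat.mul_le_mul_left
                exact Nat.mul_le_mul huJ hkW
            _ = q * J * W := (mul_assoc q J W).symm
        exact Finset.mem_erase.mpr ⟨hA u hu1 huJ, hcol _ hb1 hb2⟩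
      obtain ⟨t', x', ht', hx', hqt', hxt', hc1, hc2, hrat⟩ :=
        hF i₀ hi₀I (fun u => col (q * (u * k))) hB
      refine ⟨q * t' * k, q * (x' * k), by positivity, by positivity, ?_, ?_, ?_, ?_, ?_⟩
      · -- q * (q*t'*k) ≤ q*J*W
        calc q * (q * t' * k) = q * ((q * t') * k) := by ring
          _ ≤ q * (J * W) := by
            apply Nat.mul_le_mul_left
            exact Nat.mul_le_mul (le_trans hqt' (hFJ i₀)) hkW
          _ = q * J * W := (mul_assoc q J W).symm
      · -- x + p*t ≤ M
        calc q * (x' * k) + p * (q * t' * k) = q * ((x' + p * t') * k) := by ring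
          _ ≤ q * (J * W) := by
            apply Nat.mul_le_mul_left
            exact Nat.mul_le_mul (le_trans hxt' (hFJ i₀)) hkW
          _ = q * J * W := (mul_assoc q J W).symm
      · -- colours 1
        have e1 : q * (q * t' * k) = q * ((q * t') * k) := by ring
        rw [e1]; exact hc1
      · -- colours 2
        have e2 : q * (x' * k) + p * (q * t' * k) = q * ((x' + p * t') * k) := by ring
        rw [e2]; exact hc2
      · -- ratio
        calc N * (q * (q * t' * k)) = (N * (q * t')) * (q * k) := by ring
          _ < x' * (q * k) := (Nat.mul_lt_mul_right (show 0 < q * k by positivity)).mpr hrat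
          _ = q * (x' * k) := by ring

lemma bern(t : ℕ) : ∀ k : ℕ, t ^ k * (t + k) ≤ t * (t + 1) ^ k := by
  intro k
  induction k with
  | zero => simp
  | succ k ih =>
    calc t ^ (k + 1) * (t + (k + 1)) = t * (t ^ k * (t + k)) + t ^ (k+1) := by ring
      _ ≤ t * (t * (t + 1) ^ k) + t ^ (k+1) := by
          exact Nat.add_le_add_right (Nat.mul_le_mul_left t ih) _
      _ ≤ t * (t * (t + 1) ^ k) + t * (t+1)^k := by
          apply Nat.add_le_add_left
          calc t ^ (k+1) = t * t ^ k := by ring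
            _ ≤ t * (t+1) ^ k := Nat.mul_le_mul_left t (Nat.pow_le_pow_left (Nat.le_succ t) k)
      _ = t * (t + 1) ^ (k + 1) := by ring

lemma two_pow (t : ℕ) (ht : 0 < t) : 2 * t ^ t ≤ (t + 1) ^ t := by
  have h := bern t t
  have h2 : t * (2 * t ^ t) ≤ t * (t + 1) ^ t := by
    calc t * (2 * t ^ t) = t ^ t * (t + t) := by ring
      _ ≤ t * (t + 1) ^ t := h
  exact Nat.le_of_mul_le_mul_left h2 ht

lemma core (t B : ℕ) (ht : 0 < t) (hB : 0 < B) :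
    ∃ r : ℕ, ∃ col : ℕ → Fin r, ∀ u v : ℕ, 0 < u → 0 < v →
      col u = col v → (t + 1) * u ≤ t * v → v ≤ B * u → False := by
  set m := 2 * t with hm
  have hm1 : 0 < m := by omega
  set f : ℕ → ℕ := fun n => Nat.log 2 (n ^ m) with hf
  set E := Nat.log 2 (B ^ m) + 1 with hE
  set M := E + 1 with hM
  have hM0 : 0 < M := Nat.succ_pos _
  refine ⟨M, fun n => ⟨f n % M, Nat.mod_lt _ hM0⟩, ?_⟩
  intro u v hu hv hcol hlow hupp
  have hum : 0 < u ^ m := pow_pos hu m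
  have hvm : 0 < v ^ m := pow_pos hv m
  have htm : 0 < t ^ m := pow_pos ht m
  -- (t+1)^m ≥ 4 * t^m
  have h4 : 4 * t ^ m ≤ (t + 1) ^ m := by
    have h2 := two_pow t ht
    calc 4 * t ^ m = (2 * t ^ t) * (2 * t ^ t) := by rw [hm]; ring
      _ ≤ (t + 1) ^ t * ((t + 1) ^ t) := Nat.mul_le_mul h2 h2
      _ = (t + 1) ^ m := by rw [hm, ← pow_add]; ring_nf
  -- v^m ≥ 4 u^m
  have hpow : (t + 1) ^ m * u ^ m ≤ t ^ m * v ^ m := by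
    calc (t + 1) ^ m * u ^ m = ((t + 1) * u) ^ m := (mul_pow _ _ _).symm
      _ ≤ (t * v) ^ m := Nat.pow_le_pow_left hlow m
      _ = t ^ m * v ^ m := mul_pow _ _ _
  have h4uv : 4 * u ^ m ≤ v ^ m := by
    have : t ^ m * (4 * u ^ m) ≤ t ^ m * v ^ m := by
      calc t ^ m * (4 * u ^ m) = (4 * t ^ m) * u ^ m := by ring
        _ ≤ (t + 1) ^ m * u ^ m := Nat.mul_le_mul_right _ h4
        _ ≤ t ^ m * v ^ m := hpow
    exact Nat.le_of_mul_le_mul_left this htm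
  -- f v ≥ f u + 2
  have h2fu : 2 ^ f u ≤ u ^ m := Nat.pow_log_le_self 2 (hum.ne')
  have hlow2 : 2 ^ (f u + 2) ≤ v ^ m := by
    calc 2 ^ (f u + 2) = 4 * 2 ^ f u := by ring
      _ ≤ 4 * u ^ m := Nat.mul_le_mul_left 4 h2fu
      _ ≤ v ^ m := h4uv
  have hfvlow : f u + 2 ≤ f v :=
    (Nat.le_log_iff_pow_le (by norm_num) hvm.ne').mpr hlow2
  -- f v ≤ f u + E
  have hBm : B ^ m < 2 ^ E := Nat.lt_pow_succ_log_self (by norm_num) _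
  have hu2 : u ^ m < 2 ^ (f u + 1) := Nat.lt_pow_succ_log_self (by norm_num) _
  have hvupp : v ^ m < 2 ^ (E + (f u + 1)) := by
    calc v ^ m ≤ B ^ m * u ^ m := by
          calc v ^ m ≤ (B * u) ^ m := Nat.pow_le_pow_left hupp m
            _ = B ^ m * u ^ m := mul_pow _ _ _
      _ < 2 ^ E * 2 ^ (f u + 1) := by
          apply Nat.mul_lt_mul_of_lt_of_lt hBm hu2
      _ = 2 ^ (E + (f u + 1)) := (pow_add 2 E (f u + 1)).symm
  have hfvupp : f v < E + (f u + 1) := Nat.log_lt_of_lt_pow hvm.ne' hvupp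
  -- contradiction via mod
  have hmod : f u % M = f v % M := by
    have := congrArg Fin.val hcol
    simpa using this
  have hdvd : M ∣ (f v - f u) :=
    Nat.dvd_of_mod_eq_zero (Nat.sub_mod_eq_zero_of_mod_eq hmod.symm)
  have hle : M ≤ f v - f u := Nat.le_of_dvd (by omega) hdvd
  omega

theorem stmt_10 (a b c : ℕ) (ha : 0 < a) (hb : 0 < b) (hc : 0 < c)
    (hac : a = c) (hbc : b ≠ c) :
    (∀ r : ℕ, ∀ col : ℕ → Fin r, ∀ N : ℕ,
      ∃ x y z : ℕ, 0 < x ∧ 0 < y ∧ 0 < z ∧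
        col x = col y ∧ col y = col z ∧ x > N * y ∧ a * x + b * y = c * z) ∧
    (∃ r : ℕ, ∃ col : ℕ → Fin r, ∃ N : ℕ,
      ¬ ∃ x y z : ℕ, 0 < x ∧ 0 < y ∧ 0 < z ∧
        col x = col y ∧ col y = col z ∧ y > N * x ∧ a * x + b * y = c * z) := by
  subst hac
  constructor
  · -- Part 1
    intro r col N
    set g := Nat.gcd b a with hgdef
    have hg : 0 < g := Nat.gcd_pos_of_pos_left a hb
    set p := b / g with hpdef
    set q := a / g with hqdef
    have hpg : g * p = b := Nat.mul_div_cancel' (Nat.gcd_dvd_left b a)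
    have hqg : g * q = a := Nat.mul_div_cancel' (Nat.gcd_dvd_right b a)
    have hp : 0 < p := Nat.pos_of_ne_zero (fun h0 => by simp [h0] at hpg; omega)
    have hq : 0 < q := Nat.pos_of_ne_zero (fun h0 => by simp [h0] at hqg; omega)
    obtain ⟨M, hM⟩ := rado_key r p q N hp hq r Finset.univ (by simp)
    obtain ⟨t, x, ht, hx, _, _, h1, h2, h3⟩ := hM col (fun u _ _ => Finset.mem_univ _)
    have hbq : b * q = a * p := by rw [← hpg, ← hqg]; ring
    refine ⟨x, q * t, x + p * t, hx, by positivity, by positivity,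
      h1.symm, h1.trans h2, h3, ?_⟩
    calc a * x + b * (q * t) = a * x + (b * q) * t := by ring
      _ = a * x + (a * p) * t := by rw [hbq]
      _ = a * (x + p * t) := by ring
  · -- Part 2
    rcases Nat.lt_or_ge b a with hlt | hge
    · -- b < a = c
      obtain ⟨r, col, hcore⟩ := core (2 * a - 1) a (by omega) ha
      refine ⟨r, col, 2 * a * a, ?_⟩
      rintro ⟨x, y, z, hx, hy, hz, hxy, hyz, hgt, heq⟩
      have hub : y ≤ a * z := by nlinarith [Nat.one_le_iff_ne_zero.mpr hb.ne']
      have hlb : (2 * a - 1 + 1) * z ≤ (2 * a - 1) * y := by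
        zify [show (1:ℕ) ≤ 2 * a by omega]
        have h1 : (2 * b + 2) * y ≤ 2 * a * y := by
          apply Nat.mul_le_mul_right; omega
        have h2 : 2 * a * x ≤ 2 * a * a * x := by
          have h2' : 2 * a ≤ 2 * a * a := by nlinarith
          exact Nat.mul_le_mul_right x h2'
        zify at h1 h2 heq hgt
        nlinarith
      exact hcore z y hz hy hyz.symm hlb hub
    · -- b > a = c
      have hgt' : a < b := lt_of_le_of_ne hge (Ne.symm hbc)
      obtain ⟨r, col, hcore⟩ := core a (b + 1) ha (by omega)
      refine ⟨r, col, a, ?_⟩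
      rintro ⟨x, y, z, hx, hy, hz, hxy, hyz, hgt, heq⟩
      have hlb : (a + 1) * y ≤ a * z := by nlinarith
      have hub : z ≤ (b + 1) * y := by nlinarith
      exact hcore y z hy hz hyz hlb hub
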